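/- Let P_π be a row-stochastic S×S matrix, γ ∈ (0,1), and h ∈ ℝ^S. Then ‖(I − γ P_π)^{-1} (I − P_π) h‖_∞ ≤ span(h), where span(h) = max_s h(s) − min_s h(s). -/
import Mathlib

open Matrix

/-- The span seminorm: span(x) = max_s x(s) − min_s x(s). -/
noncomputable def spanSem {S : Type*} [Fintype S] [Nonempty S] (x : S → ℝ) : ℝ :=
  (⨆ s, x s) - ⨅ s, x s

lemma avg_le_aux {S : Type*} [Fintype S] (p f : S → ℝ) (hp0 : ∀ j, 0 ≤ p j)
    (hp1 : ∑ j, p j = 1) (c : ℝ) (hf : ∀ j, f j ≤ c) : ∑ j, p j * f j ≤ c := by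
  calc ∑ j, p j * f j ≤ ∑ j, p j * c :=
        Finset.sum_le_sum (fun j _ => mul_le_mul_of_nonneg_left (hf j) (hp0 j))
    _ = c := by rw [← Finset.sum_mul, hp1, one_mul]

lemma le_avg_aux {S : Type*} [Fintype S] (p f : S → ℝ) (hp0 : ∀ j, 0 ≤ p j)
    (hp1 : ∑ j, p j = 1) (c : ℝ) (hf : ∀ j, c ≤ f j) : c ≤ ∑ j, p j * f j := by
  calc c = ∑ j, p j * c := by rw [← Finset.sum_mul, hp1, one_mul]
    _ ≤ ∑ j, p j * f j :=
        Finset.sum_le_sum (fun j _ => mul_le_mul_of_nonneg_left (hf j) (hp0 j))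

/-- ‖(I − γ P_π)^{-1} (I − P_π) h‖_∞ ≤ span(h) for a row-stochastic matrix P_π. -/
theorem stmt10 {S : Type*} [Fintype S] [Nonempty S] [DecidableEq S]
    (P : Matrix S S ℝ) (hP0 : ∀ i j, 0 ≤ P i j) (hP1 : ∀ i, ∑ j, P i j = 1)
    (γ : ℝ) (hγ0 : 0 < γ) (hγ1 : γ < 1) (h : S → ℝ) :
    ‖((1 : Matrix S S ℝ) - γ • P)⁻¹ *ᵥ (((1 : Matrix S S ℝ) - P) *ᵥ h)‖ ≤ spanSem h := by
  set A : Matrix S S ℝ := (1 : Matrix S S ℝ) - γ • P with hA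
  set x : S → ℝ := A⁻¹ *ᵥ (((1 : Matrix S S ℝ) - P) *ᵥ h) with hxdef
  set M : ℝ := ⨆ s, h s with hMdef
  set m : ℝ := ⨅ s, h s with hmdef
  have hM : ∀ s, h s ≤ M := fun s => le_ciSup (Finite.bddAbove_range _) s
  have hm : ∀ s, m ≤ h s := fun s => ciInf_le (Finite.bddBelow_range _) s
  have hmM : m ≤ M := le_trans (hm (Classical.arbitrary S)) (hM (Classical.arbitrary S))
  -- A is invertible
  have hdet : IsUnit A.det := by
    rw [isUnit_iff_ne_zero]
    intro h0
    obtain ⟨v, hv0, hv⟩ := (Matrix.exists_mulVec_eq_zero_iff).2 h0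
    have hexp : A *ᵥ v = v - γ • (P *ᵥ v) := by
      rw [hA, Matrix.sub_mulVec, Matrix.one_mulVec, Matrix.smul_mulVec]
    have hveq : ∀ s, v s = γ * ∑ j, P s j * v j := by
      intro s
      have h1 : v s - γ * (P *ᵥ v) s = 0 := by
        have := congrFun (hexp ▸ hv) s
        simpa using this
      have h2 : (P *ᵥ v) s = ∑ j, P s j * v j := rfl
      linarith [h1, h2 ▸ h1]
    obtain ⟨s₀, -, hs₀⟩ := Finset.exists_max_image Finset.univ (fun s => |v s|)
      ⟨Classical.arbitrary S, Finset.mem_univ _⟩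
    have hpos : 0 < |v s₀| := by
      obtain ⟨t, ht⟩ := Function.ne_iff.1 hv0
      exact lt_of_lt_of_le (abs_pos.2 (by simpa using ht)) (hs₀ t (Finset.mem_univ t))
    have hb : |v s₀| ≤ γ * |v s₀| := by
      calc |v s₀| = γ * |∑ j, P s₀ j * v j| := by
            rw [hveq s₀, abs_mul, abs_of_pos hγ0]
        _ ≤ γ * ∑ j, P s₀ j * |v j| := by
            apply mul_le_mul_of_nonneg_left _ hγ0.le
            calc |∑ j, P s₀ j * v j| ≤ ∑ j, |P s₀ j * v j| := Finset.abs_sum_le_sum_abs _ _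
              _ = ∑ j, P s₀ j * |v j| := by
                  refine Finset.sum_congr rfl fun j _ => ?_
                  rw [abs_mul, abs_of_nonneg (hP0 s₀ j)]
        _ ≤ γ * |v s₀| := by
            apply mul_le_mul_of_nonneg_left _ hγ0.le
            exact avg_le_aux (P s₀) _ (hP0 s₀) (hP1 s₀) _ (fun j => hs₀ j (Finset.mem_univ j))
    nlinarith
  -- the fixed point equation
  have hAx : A *ᵥ x = ((1 : Matrix S S ℝ) - P) *ᵥ h := by
    rw [hxdef, Matrix.mulVec_mulVec, Matrix.mul_nonsing_inv A hdet, Matrix.one_mulVec]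
  have hx : ∀ s, x s - h s = ∑ j, P s j * (γ * x j - h j) := by
    intro s
    have hexp : A *ᵥ x = x - γ • (P *ᵥ x) := by
      rw [hA, Matrix.sub_mulVec, Matrix.one_mulVec, Matrix.smul_mulVec]
    have hexp2 : ((1 : Matrix S S ℝ) - P) *ᵥ h = h - P *ᵥ h := by
      rw [Matrix.sub_mulVec, Matrix.one_mulVec]
    have h1 := congrFun (hexp ▸ hexp2 ▸ hAx) s
    simp only [Pi.sub_apply, Pi.smul_apply, smul_eq_mul] at h1
    have h2 : (P *ᵥ x) s = ∑ j, P s j * x j := rfl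
    have h3 : (P *ᵥ h) s = ∑ j, P s j * h j := rfl
    rw [h2, h3] at h1
    have h4 : x s - h s = γ * ∑ j, P s j * x j - ∑ j, P s j * h j := by linarith
    rw [h4, Finset.mul_sum, ← Finset.sum_sub_distrib]
    refine Finset.sum_congr rfl fun j _ => by ring
  -- upper bound
  have hub : ∀ s, x s ≤ M - m := by
    obtain ⟨s₀, -, hs₀⟩ := Finset.exists_max_image Finset.univ (fun s => x s - h s)
      ⟨Classical.arbitrary S, Finset.mem_univ _⟩
    have key0 : ∑ j, P s₀ j * (γ * x j - h j) ≤ γ * (x s₀ - h s₀) - (1 - γ) * m := by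
      refine avg_le_aux (P s₀) _ (hP0 s₀) (hP1 s₀) _ fun j => ?_
      have h1 : x j - h j ≤ x s₀ - h s₀ := hs₀ j (Finset.mem_univ j)
      have h2 : m ≤ h j := hm j
      nlinarith
    have key : x s₀ - h s₀ ≤ γ * (x s₀ - h s₀) - (1 - γ) * m := (hx s₀) ▸ key0
    have hle : x s₀ - h s₀ ≤ -m := by nlinarith
    intro s
    have : x s - h s ≤ -m := le_trans (hs₀ s (Finset.mem_univ s)) hle
    have := hM s
    linarith
  -- lower bound
  have hlb : ∀ s, m - M ≤ x s := by
    obtain ⟨s₁, -, hs₁⟩ := Finset.exists_min_image Finset.univ (fun s => x s - h s)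
      ⟨Classical.arbitrary S, Finset.mem_univ _⟩
    have key0 : γ * (x s₁ - h s₁) - (1 - γ) * M ≤ ∑ j, P s₁ j * (γ * x j - h j) := by
      refine le_avg_aux (P s₁) _ (hP0 s₁) (hP1 s₁) _ fun j => ?_
      have h1 : x s₁ - h s₁ ≤ x j - h j := hs₁ j (Finset.mem_univ j)
      have h2 : h j ≤ M := hM j
      nlinarith
    have key : γ * (x s₁ - h s₁) - (1 - γ) * M ≤ x s₁ - h s₁ := (hx s₁) ▸ key0
    have hge : -M ≤ x s₁ - h s₁ := by nlinarith
    intro s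
    have : -M ≤ x s - h s := le_trans hge (hs₁ s (Finset.mem_univ s))
    have := hm s
    linarith
  have hspan : spanSem h = M - m := rfl
  rw [hspan]
  refine (pi_norm_le_iff_of_nonneg (by linarith)).2 fun s => ?_
  rw [Real.norm_eq_abs, abs_le]
  exact ⟨by linarith [hlb s], hub s⟩
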